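/- Let A : Ω → M_n(ℂ) be a continuous family of matrices on a topological space Ω, and suppose rank A(ξ) ≤ k for all ξ in a dense subset of Ω on which it equals k, while rank A(ξ₀) < k at some ξ₀. Then the Grassmannian-valued map ξ ↦ ker A(ξ), defined on {ξ : rank A(ξ) = k}, need not extend continuously to ξ₀; specifically, for A(ξ) = D²ψ(ξ) with ψ(ξ) = ξ₁ξ₂² + (ξ₃−ξ₂ξ₄)² on ℂ⁴ and ξ₀ = (1,0,0,0), no continuous extension of ξ ↦ ker A(ξ) to ξ₀ exists. -/

import Mathlib

/-- The Hessian matrix of second (complex) partial derivatives of `ψ` at `ξ`. -/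
noncomputable def hess {n : ℕ} (ψ : (Fin n → ℂ) → ℂ) (ξ : Fin n → ℂ) :
    Matrix (Fin n) (Fin n) ℂ :=
  Matrix.of fun i j => fderiv ℂ (fun η => fderiv ℂ ψ η (Pi.single j 1)) ξ (Pi.single i 1)

/-- `ψ(ξ) = ξ₁ξ₂² + (ξ₃ − ξ₂ξ₄)²` on `ℂ⁴`. -/
noncomputable def ψ (ξ : Fin 4 → ℂ) : ℂ :=
  ξ 0 * (ξ 1) ^ 2 + (ξ 2 - ξ 1 * ξ 3) ^ 2

noncomputable def pr (i : Fin 4) : (Fin 4 → ℂ) →L[ℂ] ℂ := ContinuousLinearMap.proj i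

noncomputable def Dψ (η : Fin 4 → ℂ) : (Fin 4 → ℂ) →L[ℂ] ℂ :=
  ((η 1)^2) • pr 0 + (2*η 0*η 1 + 2*η 1*(η 3)^2 - 2*η 2*η 3) • pr 1
    + (2*η 2 - 2*η 1*η 3) • pr 2 + (2*(η 1)^2*η 3 - 2*η 1*η 2) • pr 3

lemma hproj (i : Fin 4) (η : Fin 4 → ℂ) : HasFDerivAt (fun η : Fin 4 → ℂ => η i) (pr i) η :=
  (pr i).hasFDerivAt

lemma hasFDerivAt_psi (η : Fin 4 → ℂ) : HasFDerivAt ψ (Dψ η) η := by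
  have hfn : ψ = fun η : Fin 4 → ℂ =>
      η 0 * (η 1 * η 1) + (η 2 - η 1 * η 3) * (η 2 - η 1 * η 3) := by
    funext η; unfold ψ; ring
  rw [hfn]
  have h := ((hproj 0 η).mul ((hproj 1 η).mul (hproj 1 η))).add
    (((hproj 2 η).sub ((hproj 1 η).mul (hproj 3 η))).mul
      ((hproj 2 η).sub ((hproj 1 η).mul (hproj 3 η))))
  refine h.congr_fderiv ?_
  ext v
  simp [Dψ, pr]
  ring

noncomputable def grad (η : Fin 4 → ℂ) : Fin 4 → ℂ :=
  ![(η 1)^2, 2*η 0*η 1 + 2*η 1*(η 3)^2 - 2*η 2*η 3, 2*η 2 - 2*η 1*η 3,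
    2*(η 1)^2*η 3 - 2*η 1*η 2]

lemma fderiv_psi (j : Fin 4) : (fun η => fderiv ℂ ψ η (Pi.single j 1)) = fun η => grad η j := by
  funext η
  rw [(hasFDerivAt_psi η).fderiv]
  fin_cases j <;> simp [Dψ, pr, grad]

noncomputable def M (ξ : Fin 4 → ℂ) : Matrix (Fin 4) (Fin 4) ℂ :=
  !![0, 2*ξ 1, 0, 0;
     2*ξ 1, 2*ξ 0 + 2*(ξ 3)^2, -2*ξ 3, 4*ξ 1*ξ 3 - 2*ξ 2;
     0, -2*ξ 3, 2, -2*ξ 1;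
     0, 4*ξ 1*ξ 3 - 2*ξ 2, -2*ξ 1, 2*(ξ 1)^2]

lemma hg0 (η : Fin 4 → ℂ) : HasFDerivAt (fun η => grad η 0) ((2*η 1) • pr 1) η := by
  have h := (hproj 1 η).mul (hproj 1 η)
  have hfn : (fun η : Fin 4 → ℂ => grad η 0) = fun η => η 1 * η 1 := by
    funext η; simp [grad]; ring
  rw [hfn]; refine h.congr_fderiv ?_; ext v; simp [pr]; ring

lemma hg1 (η : Fin 4 → ℂ) : HasFDerivAt (fun η => grad η 1)
    ((2*η 1) • pr 0 + (2*η 0 + 2*(η 3)^2) • pr 1 + (-2*η 3) • pr 2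
      + (4*η 1*η 3 - 2*η 2) • pr 3) η := by
  have h := ((((hproj 0 η).mul (hproj 1 η)).add
      ((hproj 1 η).mul ((hproj 3 η).mul (hproj 3 η)))).sub
      ((hproj 2 η).mul (hproj 3 η)))
  have hfn : (fun η : Fin 4 → ℂ => grad η 1)
      = fun η : Fin 4 → ℂ => (η 0 * η 1 + η 1 * (η 3 * η 3) - η 2 * η 3) * 2 := by
    funext η; simp [grad]; ring
  rw [hfn]
  refine (h.mul_const 2).congr_fderiv ?_; ext v; simp [pr]; ring

lemma hg2 (η : Fin 4 → ℂ) : HasFDerivAt (fun η => grad η 2)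
    ((-2*η 3) • pr 1 + (2:ℂ) • pr 2 + (-2*η 1) • pr 3) η := by
  have h := ((hproj 2 η).sub ((hproj 1 η).mul (hproj 3 η))).mul_const 2
  have hfn : (fun η : Fin 4 → ℂ => grad η 2)
      = fun η : Fin 4 → ℂ => (η 2 - η 1 * η 3) * 2 := by
    funext η; simp [grad]; ring
  rw [hfn]; refine h.congr_fderiv ?_; ext v; simp [pr]; ring

lemma hg3 (η : Fin 4 → ℂ) : HasFDerivAt (fun η => grad η 3)
    ((4*η 1*η 3 - 2*η 2) • pr 1 + (-2*η 1) • pr 2 + (2*(η 1)^2) • pr 3) η := by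
  have h := (((hproj 1 η).mul ((hproj 1 η).mul (hproj 3 η))).sub
      ((hproj 1 η).mul (hproj 2 η))).mul_const 2
  have hfn : (fun η : Fin 4 → ℂ => grad η 3)
      = fun η : Fin 4 → ℂ => (η 1 * (η 1 * η 3) - η 1 * η 2) * 2 := by
    funext η; simp [grad]; ring
  rw [hfn]; refine h.congr_fderiv ?_; ext v; simp [pr]; ring

lemma hcol0 (ξ : Fin 4 → ℂ) (i : Fin 4) : hess ψ ξ i 0 = M ξ i 0 := by
  show fderiv ℂ (fun η => fderiv ℂ ψ η (Pi.single 0 1)) ξ (Pi.single i 1) = _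
  rw [fderiv_psi, (hg0 ξ).fderiv]
  fin_cases i <;> simp [pr, M, Matrix.vecHead, Matrix.vecTail]

lemma hcol1 (ξ : Fin 4 → ℂ) (i : Fin 4) : hess ψ ξ i 1 = M ξ i 1 := by
  show fderiv ℂ (fun η => fderiv ℂ ψ η (Pi.single 1 1)) ξ (Pi.single i 1) = _
  rw [fderiv_psi, (hg1 ξ).fderiv]
  fin_cases i <;> simp [pr, M, Matrix.vecHead, Matrix.vecTail]

lemma hcol2 (ξ : Fin 4 → ℂ) (i : Fin 4) : hess ψ ξ i 2 = M ξ i 2 := by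
  show fderiv ℂ (fun η => fderiv ℂ ψ η (Pi.single 2 1)) ξ (Pi.single i 1) = _
  rw [fderiv_psi, (hg2 ξ).fderiv]
  fin_cases i <;> simp [pr, M, Matrix.vecHead, Matrix.vecTail]

lemma hcol3 (ξ : Fin 4 → ℂ) (i : Fin 4) : hess ψ ξ i 3 = M ξ i 3 := by
  show fderiv ℂ (fun η => fderiv ℂ ψ η (Pi.single 3 1)) ξ (Pi.single i 1) = _
  rw [fderiv_psi, (hg3 ξ).fderiv]
  fin_cases i <;> simp [pr, M, Matrix.vecHead, Matrix.vecTail]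

lemma hess_eq (ξ : Fin 4 → ℂ) : hess ψ ξ = M ξ := by
  ext i j
  fin_cases j
  exacts [hcol0 ξ i, hcol1 ξ i, hcol2 ξ i, hcol3 ξ i]

lemma mulVec_v (ε c : ℂ) : (M ![1, ε, c*ε, 0]).mulVec ![c, 0, ε, 1] = 0 := by
  funext i
  fin_cases i <;>
    simp [M, Matrix.mulVec, dotProduct, Fin.sum_univ_four] <;> ring

lemma ker_M (ε c : ℂ) (hε : ε ≠ 0) :
    LinearMap.ker (M ![1, ε, c*ε, 0]).mulVecLin = Submodule.span ℂ {![c, 0, ε, 1]} := by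
  ext x
  rw [LinearMap.mem_ker, Submodule.mem_span_singleton]
  constructor
  · intro h
    have h0 := congrFun h 0
    have h1 := congrFun h 1
    have h2 := congrFun h 2
    simp [M, Matrix.mulVecLin_apply, Matrix.mulVec, dotProduct, Matrix.vecHead, Matrix.vecTail,
      Fin.sum_univ_four] at h0 h1 h2
    have hx1 : x 1 = 0 := by
      rcases h0 with h0 | h0
      · exact absurd h0 hε
      · exact h0
    refine ⟨x 3, funext fun i => ?_⟩
    fin_cases i <;> simp [hx1]
    · have : ε * (x 3 * c - x 0) = 0 := by
        rw [hx1] at h1; linear_combination -h1/2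
      rcases mul_eq_zero.1 this with h | h
      · exact absurd h hε
      · linear_combination h
    · linear_combination -h2/2
  · rintro ⟨a, rfl⟩
    have := mulVec_v ε c
    rw [Matrix.mulVecLin_apply, Matrix.mulVec_smul, this, smul_zero]

lemma rank_M (ε c : ℂ) (hε : ε ≠ 0) : (M ![1, ε, c*ε, 0]).rank = 3 := by
  have hv : (![c, 0, ε, 1] : Fin 4 → ℂ) ≠ 0 := by
    intro h
    have := congrFun h 3
    simp at this
  have hk : Module.finrank ℂ (LinearMap.ker (M ![1, ε, c*ε, 0]).mulVecLin) = 1 := by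
    rw [ker_M ε c hε, finrank_span_singleton hv]
  have hr := LinearMap.finrank_range_add_finrank_ker (M ![1, ε, c*ε, 0]).mulVecLin
  rw [hk] at hr
  simp [Module.finrank_pi] at hr
  rw [Matrix.rank]
  omega

noncomputable def εs (j : ℕ) : ℂ := ((((j:ℝ)+1)⁻¹ : ℝ) : ℂ)

lemma εs_ne (j : ℕ) : εs j ≠ 0 := by
  have h : ((j:ℝ)+1) ≠ 0 := by positivity
  exact Complex.ofReal_ne_zero.2 (inv_ne_zero h)

lemma εs_norm_le (j : ℕ) : ‖εs j‖ ≤ 1 := by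
  have h1 : (1:ℝ) ≤ (j:ℝ)+1 := by have := Nat.cast_nonneg (α := ℝ) j; linarith
  have h0 : (0:ℝ) < (j:ℝ)+1 := by positivity
  have heq : ‖εs j‖ = ((j:ℝ)+1)⁻¹ := by
    rw [εs, Complex.norm_real, Real.norm_eq_abs, abs_of_pos (by positivity)]
  rw [heq, inv_le_one_iff₀]
  right; exact h1

lemma εs_tendsto : Filter.Tendsto εs Filter.atTop (nhds 0) := by
  have h : Filter.Tendsto (fun j : ℕ => ((j:ℝ)+1)⁻¹) Filter.atTop (nhds 0) := by
    simpa [one_div] using tendsto_one_div_add_atTop_nhds_zero_nat (𝕜 := ℝ)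
  have := (Complex.continuous_ofReal.tendsto 0).comp h
  exact this

lemma key (c : ℂ) (hc : ‖c‖ ≤ 1) (L : Submodule ℂ (Fin 4 → ℂ))
    (hL : ∀ ξ : ℕ → Fin 4 → ℂ,
        Filter.Tendsto ξ Filter.atTop (nhds ![1, 0, 0, 0]) →
        (∀ j, (hess ψ (ξ j)).rank = 3) →
        ∀ u : ℕ → Fin 4 → ℂ,
          (∀ j, ‖u j‖ = 1 ∧ (hess ψ (ξ j)).mulVec (u j) = 0) →
          ∀ w : Fin 4 → ℂ, Filter.Tendsto u Filter.atTop (nhds w) → w ∈ L) :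
    (![c, 0, 0, 1] : Fin 4 → ℂ) ∈ L := by
  refine hL (fun j => ![1, εs j, c * εs j, 0]) ?_ (fun j => ?_)
    (fun j => ![c, 0, εs j, 1]) (fun j => ⟨?_, ?_⟩) ![c, 0, 0, 1] ?_
  · rw [tendsto_pi_nhds]
    intro i
    fin_cases i <;> simp <;>
      first
        | exact tendsto_const_nhds
        | exact εs_tendsto
        | simpa using εs_tendsto.const_mul c
  · rw [hess_eq]
    exact rank_M _ c (εs_ne j)
  · refine le_antisymm ?_ ?_
    · refine (pi_norm_le_iff_of_nonneg zero_le_one).2 fun i => ?_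
      fin_cases i <;> simp <;> first | exact hc | exact εs_norm_le j
    · have := norm_le_pi_norm (![c, 0, εs j, 1] : Fin 4 → ℂ) 3
      simpa using this
  · rw [hess_eq]
    exact mulVec_v _ _
  · rw [tendsto_pi_nhds]
    intro i
    fin_cases i <;> simp <;>
      first
        | exact tendsto_const_nhds
        | exact εs_tendsto

/-- There is no line `L` (1-dimensional subspace of ℂ⁴) to which the kernel-line map
`ξ ↦ ker D²ψ(ξ)` extends continuously at `ξ₀ = (1,0,0,0)`: i.e. no line `L` such that,
along every sequence of rank-3 points converging to `ξ₀`, all limit points of unit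
vectors spanning the kernels lie in `L`. -/
theorem stmt_18 :
    ¬ ∃ L : Submodule ℂ (Fin 4 → ℂ), Module.finrank ℂ L = 1 ∧
      ∀ ξ : ℕ → Fin 4 → ℂ,
        Filter.Tendsto ξ Filter.atTop (nhds ![1, 0, 0, 0]) →
        (∀ j, (hess ψ (ξ j)).rank = 3) →
        ∀ u : ℕ → Fin 4 → ℂ,
          (∀ j, ‖u j‖ = 1 ∧ (hess ψ (ξ j)).mulVec (u j) = 0) →
          ∀ w : Fin 4 → ℂ, Filter.Tendsto u Filter.atTop (nhds w) → w ∈ L := by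
  rintro ⟨L, hL1, hL⟩
  have h0 : (![(0:ℂ), 0, 0, 1] : Fin 4 → ℂ) ∈ L := by
    simpa using key 0 (by simp) L hL
  have h1 : (![(1:ℂ), 0, 0, 1] : Fin 4 → ℂ) ∈ L := key 1 (by simp) L hL
  obtain ⟨v₀, hv₀, hall⟩ := finrank_eq_one_iff'.mp hL1
  obtain ⟨a, ha⟩ := hall ⟨_, h0⟩
  obtain ⟨b, hb⟩ := hall ⟨_, h1⟩
  have ha' : a • (v₀ : Fin 4 → ℂ) = ![(0:ℂ), 0, 0, 1] := congrArg Subtype.val ha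
  have hb' : b • (v₀ : Fin 4 → ℂ) = ![(1:ℂ), 0, 0, 1] := congrArg Subtype.val hb
  have ha3 : a * (v₀ : Fin 4 → ℂ) 3 = 1 := by simpa using congrFun ha' 3
  have ha0 : a * (v₀ : Fin 4 → ℂ) 0 = 0 := by simpa using congrFun ha' 0
  have hb0 : b * (v₀ : Fin 4 → ℂ) 0 = 1 := by simpa using congrFun hb' 0
  have hane : a ≠ 0 := left_ne_zero_of_mul_eq_one ha3
  have hv00 : (v₀ : Fin 4 → ℂ) 0 = 0 := by
    rcases mul_eq_zero.1 ha0 with h | h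
    · exact absurd h hane
    · exact h
  rw [hv00, mul_zero] at hb0
  exact zero_ne_one hb0
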